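/- Let G be a finite cyclic group of order n with generator f, and suppose 8 divides n - 6 (so (n-6)/8 is a natural number). Then the minimal distance of the set {f, 2f, (n/2)f, -4f} satisfies min Δ(B({f, 2f, (n/2)f, -4f})) = (n-6)/8. -/

import Mathlib

open Multiset

section Defs

variable {G : Type*} [AddCommGroup G]

/-- `S` is a zero-sum sequence over `G0`. -/
def IsZeroSumSeq (G0 : Set G) (S : Multiset G) : Prop :=
  (∀ g ∈ S, g ∈ G0) ∧ S.sum = 0

/-- `S` is a minimal zero-sum sequence over `G0`. -/
def IsMinZeroSum (G0 : Set G) (S : Multiset G) : Prop :=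
  S ≠ 0 ∧ IsZeroSumSeq G0 S ∧
    ∀ T : Multiset G, T ≤ S → T ≠ 0 → T ≠ S → T.sum ≠ 0

/-- The set of lengths of factorizations of `B` into minimal zero-sum sequences over `G0`. -/
def LengthSet (G0 : Set G) (B : Multiset G) : Set ℕ :=
  { k | ∃ F : Multiset (Multiset G), F.card = k ∧ (∀ A ∈ F, IsMinZeroSum G0 A) ∧ F.sum = B }

/-- The set of successive distances of a set of naturals. -/
def DeltaOf (L : Set ℕ) : Set ℕ :=
  { d | ∃ a ∈ L, ∃ b ∈ L, a < b ∧ b - a = d ∧ ∀ c ∈ L, ¬(a < c ∧ c < b) }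

/-- The set of distances of the monoid of zero-sum sequences over `G0`. -/
def DeltaB (G0 : Set G) : Set ℕ :=
  ⋃ B ∈ { B : Multiset G | IsZeroSumSeq G0 B }, DeltaOf (LengthSet G0 B)

/-- Minimal distance, with the convention `min ∅ = 0`. -/
noncomputable def minDelta (G0 : Set G) : ℕ := sInf (DeltaB G0)

/-- Cross number of a sequence. -/
noncomputable def crossNum (S : Multiset G) : ℚ :=
  (S.map fun g => (1 : ℚ) / (addOrderOf g : ℚ)).sum

/-- `G0` is weakly half-factorial. -/
def WeaklyHF (G0 : Set G) : Prop :=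
  ∀ A : Multiset G, IsMinZeroSum G0 A → ∃ m : ℕ, crossNum A = (m : ℚ)

/-- `G0` is half-factorial. -/
def HalfFactorial (G0 : Set G) : Prop :=
  ∀ B : Multiset G, IsZeroSumSeq G0 B →
    ∀ k ∈ LengthSet G0 B, ∀ l ∈ LengthSet G0 B, k = l

end Defs


/-- Lift a sub-multiset through `map`. -/
lemma exists_le_map {α β : Type*} (g : α → β) (S : Multiset α) :
    ∀ T : Multiset β, T ≤ S.map g → ∃ S' ≤ S, S'.map g = T := by
  classical
  induction S using Multiset.induction with
  | empty =>
    intro T hT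
    simp only [Multiset.map_zero, Multiset.le_zero] at hT
    exact ⟨0, le_refl _, by simp [hT]⟩
  | cons a S ih =>
    intro T hT
    rw [Multiset.map_cons] at hT
    by_cases hm : g a ∈ T
    · obtain ⟨T', rfl⟩ : ∃ T', T = g a ::ₘ T' := ⟨T.erase (g a), (Multiset.cons_erase hm).symm⟩
      have h2 : T' ≤ S.map g := by
        have := Multiset.erase_le_erase (g a) hT
        simpa using this
      obtain ⟨S', hS', hmap⟩ := ih T' h2
      exact ⟨a ::ₘ S', Multiset.cons_le_cons _ hS', by simp [hmap]⟩
    · have h2 : T ≤ S.map g := by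
        rw [Multiset.le_iff_count] at hT ⊢
        intro x
        have hx := hT x
        rcases eq_or_ne x (g a) with rfl | hne
        · simp [Multiset.count_eq_zero_of_notMem hm]
        · rwa [Multiset.count_cons_of_ne hne] at hx
      obtain ⟨S', hS', hmap⟩ := ih T h2
      exact ⟨S', le_trans hS' (Multiset.le_cons_self _ _), hmap⟩

section Four

variable {x1 x2 x3 x4 : ℕ}

/-- A multiset supported on four distinct values is the sum of replicates. -/
lemma repr4 (h12 : x1 ≠ x2) (h13 : x1 ≠ x3) (h14 : x1 ≠ x4)
    (h23 : x2 ≠ x3) (h24 : x2 ≠ x4) (h34 : x3 ≠ x4)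
    {T : Multiset ℕ} (hT : ∀ x ∈ T, x = x1 ∨ x = x2 ∨ x = x3 ∨ x = x4) :
    T = replicate (T.count x1) x1 + replicate (T.count x2) x2 +
        replicate (T.count x3) x3 + replicate (T.count x4) x4 := by
  ext x
  simp only [Multiset.count_add, Multiset.count_replicate]
  by_cases e1 : x = x1
  · subst e1; simp [Ne.symm h12, Ne.symm h13, Ne.symm h14, h12, h13, h14]
  · by_cases e2 : x = x2
    · subst e2; simp [h12, Ne.symm h23, Ne.symm h24, h23, h24]
    · by_cases e3 : x = x3
      · subst e3; simp [h13, h23, Ne.symm h34, h34]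
      · by_cases e4 : x = x4
        · subst e4; simp [h14, h24, h34]
        · have hnm : x ∉ T := fun hx => by rcases hT x hx with h|h|h|h <;> tauto
          simp [Multiset.count_eq_zero_of_notMem hnm, Ne.symm e1, Ne.symm e2,
            Ne.symm e3, Ne.symm e4]

lemma sum4 (h12 : x1 ≠ x2) (h13 : x1 ≠ x3) (h14 : x1 ≠ x4)
    (h23 : x2 ≠ x3) (h24 : x2 ≠ x4) (h34 : x3 ≠ x4)
    {T : Multiset ℕ} (hT : ∀ x ∈ T, x = x1 ∨ x = x2 ∨ x = x3 ∨ x = x4) :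
    T.sum = T.count x1 * x1 + T.count x2 * x2 + T.count x3 * x3 + T.count x4 * x4 := by
  conv_lhs => rw [repr4 h12 h13 h14 h23 h24 h34 hT]
  simp [Multiset.sum_replicate, smul_eq_mul]

lemma card4 (h12 : x1 ≠ x2) (h13 : x1 ≠ x3) (h14 : x1 ≠ x4)
    (h23 : x2 ≠ x3) (h24 : x2 ≠ x4) (h34 : x3 ≠ x4)
    {T : Multiset ℕ} (hT : ∀ x ∈ T, x = x1 ∨ x = x2 ∨ x = x3 ∨ x = x4) :
    Multiset.card T = T.count x1 + T.count x2 + T.count x3 + T.count x4 := by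
  conv_lhs => rw [repr4 h12 h13 h14 h23 h24 h34 hT]
  simp

lemma eq_of_count4 (h12 : x1 ≠ x2) (h13 : x1 ≠ x3) (h14 : x1 ≠ x4)
    (h23 : x2 ≠ x3) (h24 : x2 ≠ x4) (h34 : x3 ≠ x4)
    {T T' : Multiset ℕ} (hT : ∀ x ∈ T, x = x1 ∨ x = x2 ∨ x = x3 ∨ x = x4)
    (hT' : ∀ x ∈ T', x = x1 ∨ x = x2 ∨ x = x3 ∨ x = x4)
    (hc1 : T.count x1 = T'.count x1) (hc2 : T.count x2 = T'.count x2)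
    (hc3 : T.count x3 = T'.count x3) (hc4 : T.count x4 = T'.count x4) : T = T' := by
  rw [repr4 h12 h13 h14 h23 h24 h34 hT, repr4 h12 h13 h14 h23 h24 h34 hT', hc1, hc2, hc3, hc4]

/-- counts of the standard 4-replicate multiset -/
lemma counts_sub4 (h12 : x1 ≠ x2) (h13 : x1 ≠ x3) (h14 : x1 ≠ x4)
    (h23 : x2 ≠ x3) (h24 : x2 ≠ x4) (h34 : x3 ≠ x4) (i j c e : ℕ) :
    (replicate i x1 + replicate j x2 + replicate c x3 + replicate e x4).count x1 = i ∧
    (replicate i x1 + replicate j x2 + replicate c x3 + replicate e x4).count x2 = j ∧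
    (replicate i x1 + replicate j x2 + replicate c x3 + replicate e x4).count x3 = c ∧
    (replicate i x1 + replicate j x2 + replicate c x3 + replicate e x4).count x4 = e := by
  refine ⟨?_, ?_, ?_, ?_⟩ <;>
    simp [Multiset.count_replicate, h12, h13, h14, h23, h24, h34,
      Ne.symm h12, Ne.symm h13, Ne.symm h14, Ne.symm h23, Ne.symm h24, Ne.symm h34]

lemma sub4_le (h12 : x1 ≠ x2) (h13 : x1 ≠ x3) (h14 : x1 ≠ x4)
    (h23 : x2 ≠ x3) (h24 : x2 ≠ x4) (h34 : x3 ≠ x4) {T : Multiset ℕ} {i j c e : ℕ}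
    (hi : i ≤ T.count x1) (hj : j ≤ T.count x2) (hc : c ≤ T.count x3) (he : e ≤ T.count x4) :
    replicate i x1 + replicate j x2 + replicate c x3 + replicate e x4 ≤ T := by
  rw [Multiset.le_iff_count]
  intro x
  simp only [Multiset.count_add, Multiset.count_replicate]
  by_cases e1 : x = x1
  · subst e1; simpa [Ne.symm h12, Ne.symm h13, Ne.symm h14] using hi
  · by_cases e2 : x = x2
    · subst e2; simpa [h12, Ne.symm h23, Ne.symm h24] using hj
    · by_cases e3 : x = x3
      · subst e3; simpa [h13, h23, Ne.symm h34] using hc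
      · by_cases e4 : x = x4
        · subst e4; simpa [h14, h24, h34] using he
        · simp [Ne.symm e1, Ne.symm e2, Ne.symm e3, Ne.symm e4]

/-- From multiset minimality to a numerical minimality principle. -/
lemma P_of_min (h12 : x1 ≠ x2) (h13 : x1 ≠ x3) (h14 : x1 ≠ x4)
    (h23 : x2 ≠ x3) (h24 : x2 ≠ x4) (h34 : x3 ≠ x4) {T : Multiset ℕ}
    (hT : ∀ x ∈ T, x = x1 ∨ x = x2 ∨ x = x3 ∨ x = x4) (N : ℕ)
    (hmin : ∀ T' ≤ T, T' ≠ 0 → T' ≠ T → ¬ N ∣ T'.sum) :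
    ∀ i j c e, i ≤ T.count x1 → j ≤ T.count x2 → c ≤ T.count x3 → e ≤ T.count x4 →
      ¬(i = 0 ∧ j = 0 ∧ c = 0 ∧ e = 0) →
      ¬(i = T.count x1 ∧ j = T.count x2 ∧ c = T.count x3 ∧ e = T.count x4) →
      ¬ N ∣ (i * x1 + j * x2 + c * x3 + e * x4) := by
  intro i j c e hi hj hc he hne0 hneT hdvd
  obtain ⟨q1, q2, q3, q4⟩ := counts_sub4 h12 h13 h14 h23 h24 h34 i j c e
  set sub := replicate i x1 + replicate j x2 + replicate c x3 + replicate e x4 with hsub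
  have hle : sub ≤ T := sub4_le h12 h13 h14 h23 h24 h34 hi hj hc he
  have hne0' : sub ≠ 0 := by
    intro h
    have : Multiset.card sub = 0 := by rw [h]; simp
    simp only [hsub] at this
    simp only [Multiset.card_add, Multiset.card_replicate] at this
    omega
  have hneT' : sub ≠ T := by
    intro h
    exact hneT ⟨by rw [← q1, h], by rw [← q2, h], by rw [← q3, h], by rw [← q4, h]⟩
  have hsum : sub.sum = i * x1 + j * x2 + c * x3 + e * x4 := by
    simp [hsub, Multiset.sum_replicate, smul_eq_mul]
  exact hmin sub hle hne0' hneT' (by rwa [hsum])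

end Four

section Numeric

/-- Numeric core, case n = 6 (k = 0): values 1,2,3 modulo 6. -/
lemma numeric_core0 (a b c : ℕ)
    (hdvd : 6 ∣ (a + 2*b + 3*c)) (hne : a + b + c ≠ 0)
    (P : ∀ i j c', i ≤ a → j ≤ b → c' ≤ c → ¬(i = 0 ∧ j = 0 ∧ c' = 0) →
      ¬(i = a ∧ j = b ∧ c' = c) → ¬ 6 ∣ (i + 2*j + 3*c')) :
    a + 2*b + 3*c = 6 := by
  have hpos : 0 < a + 2*b + 3*c := by omega
  have h6 : 6 ≤ a + 2*b + 3*c := Nat.le_of_dvd hpos hdvd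
  by_contra hne6
  have h12 : 12 ≤ a + 2*b + 3*c := by
    obtain ⟨m, hm⟩ := hdvd; omega
  by_cases hc2 : 2 ≤ c
  · by_cases heq : (0 = a ∧ 0 = b ∧ 2 = c)
    · omega
    · exact P 0 0 2 (by omega) (by omega) hc2 (by omega) (by tauto) (by norm_num)
  · have hab : 9 ≤ a + 2*b := by omega
    by_cases hb3 : 3 ≤ b
    · by_cases heq : (0 = a ∧ 3 = b ∧ 0 = c)
      · omega
      · exact P 0 3 0 (by omega) hb3 (by omega) (by omega) (by tauto) (by norm_num)
    · by_cases heq : (6 - 2*b = a ∧ b = b ∧ 0 = c)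
      · omega
      · exact P (6 - 2*b) b 0 (by omega) le_rfl (by omega) (by omega) (by tauto)
          ⟨1, by omega⟩

/-- Numeric core, case k ≥ 1. -/
lemma numeric_core (k a b c d : ℕ) (hk : 1 ≤ k)
    (hdvd : (8*k+6) ∣ (a + 2*b + (4*k+3)*c + (8*k+2)*d))
    (hne : a + b + c + d ≠ 0)
    (P : ∀ i j c' e, i ≤ a → j ≤ b → c' ≤ c → e ≤ d →
        ¬(i = 0 ∧ j = 0 ∧ c' = 0 ∧ e = 0) → ¬(i = a ∧ j = b ∧ c' = c ∧ e = d) →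
        ¬ (8*k+6) ∣ (i + 2*j + (4*k+3)*c' + (8*k+2)*e)) :
    ∃ m, a + 2*b + (4*k+3)*c + (8*k+2)*d = (8*k+6) * m ∧ m % k = 1 % k := by
  -- Step 1 : c ≥ 2
  by_cases hc2 : 2 ≤ c
  · by_cases heq : (0 = a ∧ 0 = b ∧ 2 = c ∧ 0 = d)
    · obtain ⟨ha, hb, hc, hd⟩ := heq
      exact ⟨1, by rw [← ha, ← hb, ← hc, ← hd]; ring, rfl⟩
    · exact absurd ⟨1, by ring⟩
        (P 0 0 2 0 (by omega) (by omega) hc2 (by omega) (by omega) heq)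
  have hc1 : c ≤ 1 := by omega
  -- Step 2 : a + 2b ≥ n
  by_cases hab : 8*k+6 ≤ a + 2*b
  · by_cases hb : 4*k+3 ≤ b
    · by_cases heq : (0 = a ∧ 4*k+3 = b ∧ 0 = c ∧ 0 = d)
      · obtain ⟨ha, hbb, hc, hd⟩ := heq
        exact ⟨1, by rw [← ha, ← hbb, ← hc, ← hd]; ring, rfl⟩
      · exact absurd ⟨1, by ring⟩
          (P 0 (4*k+3) 0 0 (by omega) hb (by omega) (by omega) (by omega) heq)
    · by_cases heq : (8*k+6-2*b = a ∧ b = b ∧ 0 = c ∧ 0 = d)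
      · obtain ⟨ha, hbb, hc, hd⟩ := heq
        exact ⟨1, by rw [← ha, ← hc, ← hd]; omega, rfl⟩
      · exact absurd ⟨1, by omega⟩
          (P (8*k+6-2*b) b 0 0 (by omega) le_rfl (by omega) (by omega) (by omega) heq)
  have hab' : a + 2*b ≤ 8*k+5 := by omega
  -- Step 3 : d ≥ 4k+3
  by_cases hd3 : 4*k+3 ≤ d
  · by_cases heq : (0 = a ∧ 0 = b ∧ 0 = c ∧ 4*k+3 = d)
    · obtain ⟨ha, hb, hc, hd⟩ := heq
      refine ⟨4*k+1, by rw [← ha, ← hb, ← hc, ← hd]; ring, ?_⟩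
      rw [show 4*k+1 = 1 + k*4 by ring]
      exact Nat.add_mul_mod_self_left 1 k 4
    · exact absurd ⟨4*k+1, by ring⟩
        (P 0 0 0 (4*k+3) (by omega) (by omega) (by omega) hd3 (by omega) heq)
  have hd' : d ≤ 4*k+2 := by omega
  -- Step 4 : 4-extraction
  by_cases hd4 : 1 ≤ d ∧ 4 ≤ a + 2*b
  · obtain ⟨hd1, hab4⟩ := hd4
    obtain ⟨i, j, hia, hjb, hij⟩ : ∃ i j, i ≤ a ∧ j ≤ b ∧ i + 2*j = 4 := by
      by_cases h4a : 4 ≤ a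
      · exact ⟨4, 0, h4a, by omega, by omega⟩
      · by_cases h2b : 2 ≤ b
        · exact ⟨0, 2, by omega, h2b, by omega⟩
        · exact ⟨2, 1, by omega, by omega, by omega⟩
    by_cases heq : (i = a ∧ j = b ∧ 0 = c ∧ 1 = d)
    · obtain ⟨ha, hb, hc, hd⟩ := heq
      exact ⟨1, by rw [← ha, ← hb, ← hc, ← hd]; omega, rfl⟩
    · exact absurd ⟨1, by omega⟩
        (P i j 0 1 hia hjb (by omega) hd1 (by omega) heq)
  push_neg at hd4
  -- Step 5 : Y-extraction
  by_cases hY : c = 1 ∧ 1 ≤ a ∧ k+1 ≤ d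
  · obtain ⟨hcc, ha1, hdk⟩ := hY
    by_cases heq : (1 = a ∧ 0 = b ∧ 1 = c ∧ k+1 = d)
    · obtain ⟨ha, hb, hc, hd⟩ := heq
      refine ⟨k+1, by rw [← ha, ← hb, ← hc, ← hd]; ring, ?_⟩
      rw [show k+1 = 1 + k*1 by ring]
      exact Nat.add_mul_mod_self_left 1 k 1
    · exact absurd ⟨k+1, by ring⟩
        (P 1 0 1 (k+1) ha1 (by omega) (by omega) hdk (by omega) heq)
  -- Endgame
  obtain ⟨m, hm⟩ := hdvd
  interval_cases c
  · -- c = 0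
    by_cases hd0 : d = 0
    · subst hd0
      exfalso
      have hpos : 0 < a + 2*b + (4*k+3)*0 + (8*k+2)*0 := by omega
      have h1 := Nat.le_of_dvd hpos ⟨m, hm⟩
      omega
    · have hd1 : 1 ≤ d := by omega
      have hab3 : a + 2*b ≤ 3 := by
        have := hd4 hd1; omega
      have hmd : m ≤ d := by
        by_contra hlt
        push_neg at hlt
        have h1 : (8*k+6) * (d+1) ≤ (8*k+6) * m := Nat.mul_le_mul_left _ hlt
        have h2 : (8*k+6) * (d+1) = (8*k+2)*d + 4*d + (8*k+6) := by ring
        linarith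
      have hdm : d ≤ m + 1 := by
        by_contra hlt
        push_neg at hlt
        have h1 : (8*k+2) * (m+2) ≤ (8*k+2) * d := Nat.mul_le_mul_left _ hlt
        have h2 : (8*k+2) * (m+2) = (8*k+2)*m + (16*k+4) := by ring
        have h3 : (8*k+6) * m = (8*k+2)*m + 4*m := by ring
        -- 4m ≥ 16k + 4 - (a+2b) ⇒ m ≥ 4k+1 ⇒ d ≥ 4k+3, contradiction
        have h4 : 16*k + 4 ≤ 4*m + (a + 2*b) := by linarith
        linarith
      rcases (by omega : d = m ∨ d = m + 1) with hdm0 | hdm1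
      · exfalso
        subst hdm0
        have h2 : (8*k+6) * d = (8*k+2)*d + 4*d := by ring
        have h3 : a + 2*b = 4*d := by linarith
        omega
      · subst hdm1
        have h2 : (8*k+2) * (m+1) = (8*k+2)*m + 8*k+2 := by ring
        have h3 : (8*k+6) * m = (8*k+2)*m + 4*m := by ring
        have h4 : a + 2*b + 8*k + 2 = 4*m := by linarith
        have hm' : m = 2*k+1 := by omega
        refine ⟨m, hm, ?_⟩
        rw [hm', show 2*k+1 = 1 + k*2 by ring]
        exact Nat.add_mul_mod_self_left 1 k 2
  · -- c = 1
    have h2d : (8*k+2)*d = 2*((4*k+1)*d) := by ring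
    have h2m : (8*k+6)*m = 2*((4*k+3)*m) := by ring
    have key : a + 2*b + (4*k+3) + 2*((4*k+1)*d) = 2*((4*k+3)*m) := by linarith
    have ha1 : 1 ≤ a := by omega
    have hdk : d ≤ k := by
      by_contra h
      exact hY ⟨rfl, ha1, by omega⟩
    by_cases hd0 : d = 0
    · subst hd0
      have hm1 : 1 ≤ m := by
        rcases Nat.eq_zero_or_pos m with rfl | h
        · simp at hm
        · exact h
      have hm2 : m ≤ 1 := by
        by_contra h
        push_neg at h
        have h1 : (8*k+6) * 2 ≤ (8*k+6) * m := Nat.mul_le_mul_left _ h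
        linarith
      have : m = 1 := by omega
      subst this
      exact ⟨1, hm, rfl⟩
    · exfalso
      have hd1 : 1 ≤ d := by omega
      have hab3 : a + 2*b ≤ 3 := by
        have := hd4 hd1; omega
      have hmled : m ≤ d := by
        by_contra hlt
        push_neg at hlt
        have h1 : (8*k+6) * (d+1) ≤ (8*k+6) * m := Nat.mul_le_mul_left _ hlt
        have h2 : (8*k+6) * (d+1) = (8*k+2)*d + 4*d + (8*k+6) := by ring
        linarith
      have h1 : (8*k+6) * m ≤ (8*k+6) * d := Nat.mul_le_mul_left _ hmled
      have h2 : (8*k+6) * d = (8*k+2)*d + 4*d := by ring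
      have h3 : a + 2*b + (4*k+3) ≤ 4*d := by linarith
      have h4 : 4*d ≤ 4*k := by omega
      omega

end Numeric

/-- THE CORE LEMMA: any minimal zero-sum sequence over {1,2,4k+3,8k+2} mod 8k+6
has sum (8k+6)·m with m ≡ 1 mod k. -/
lemma core (k : ℕ) {T : Multiset ℕ}
    (hV : ∀ x ∈ T, x = 1 ∨ x = 2 ∨ x = 4*k+3 ∨ x = 8*k+2)
    (hne : T ≠ 0) (hdvd : (8*k+6) ∣ T.sum)
    (hmin : ∀ T' ≤ T, T' ≠ 0 → T' ≠ T → ¬ (8*k+6) ∣ T'.sum) :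
    ∃ m, T.sum = (8*k+6) * m ∧ m % k = 1 % k := by
  rcases Nat.eq_zero_or_pos k with rfl | hk
  · -- k = 0 : values 1, 2, 3 (and dummy 7)
    have hV' : ∀ x ∈ T, x = 1 ∨ x = 2 ∨ x = 3 ∨ x = 7 := by
      intro x hx; rcases hV x hx with h|h|h|h <;> omega
    have d12 : (1:ℕ) ≠ 2 := by omega
    have d13 : (1:ℕ) ≠ 3 := by omega
    have d14 : (1:ℕ) ≠ 7 := by omega
    have d23 : (2:ℕ) ≠ 3 := by omega
    have d24 : (2:ℕ) ≠ 7 := by omega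
    have d34 : (3:ℕ) ≠ 7 := by omega
    have h7 : T.count 7 = 0 :=
      Multiset.count_eq_zero.2 (fun h => by rcases hV 7 h with h|h|h|h <;> omega)
    have hsum : T.sum = T.count 1 * 1 + T.count 2 * 2 + T.count 3 * 3 + T.count 7 * 7 :=
      sum4 d12 d13 d14 d23 d24 d34 hV'
    have hcard : Multiset.card T = T.count 1 + T.count 2 + T.count 3 + T.count 7 :=
      card4 d12 d13 d14 d23 d24 d34 hV'
    have hP := P_of_min d12 d13 d14 d23 d24 d34 hV' (8*0+6) hmin
    have hmain : T.count 1 + 2 * T.count 2 + 3 * T.count 3 = 6 := by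
      apply numeric_core0 (T.count 1) (T.count 2) (T.count 3)
      · have : T.sum = T.count 1 + 2 * T.count 2 + 3 * T.count 3 := by omega
        rw [← this]
        have : (6:ℕ) = 8*0+6 := by norm_num
        rw [this]; exact hdvd
      · intro h0
        apply hne
        rw [← Multiset.card_eq_zero]
        omega
      · intro i j c' hi hj hc hne0 hneq hdvd'
        refine hP i j c' 0 hi hj hc (by omega) (by tauto) ?_ ?_
        · intro ⟨e1, e2, e3, _⟩; exact hneq ⟨e1, e2, e3⟩
        · have : i * 1 + j * 2 + c' * 3 + 0 * 7 = i + 2*j + 3*c' := by ring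
          rw [this]
          have h6 : (8*0+6:ℕ) = 6 := by norm_num
          rw [h6]; exact hdvd'
    exact ⟨1, by omega, rfl⟩
  · -- k ≥ 1 : values 1, 2, 4k+3, 8k+2 are pairwise distinct
    have d12 : (1:ℕ) ≠ 2 := by omega
    have d13 : (1:ℕ) ≠ 4*k+3 := by omega
    have d14 : (1:ℕ) ≠ 8*k+2 := by omega
    have d23 : (2:ℕ) ≠ 4*k+3 := by omega
    have d24 : (2:ℕ) ≠ 8*k+2 := by omega
    have d34 : (4*k+3:ℕ) ≠ 8*k+2 := by omega
    have hsum : T.sum = T.count 1 * 1 + T.count 2 * 2 + T.count (4*k+3) * (4*k+3)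
        + T.count (8*k+2) * (8*k+2) := sum4 d12 d13 d14 d23 d24 d34 hV
    have hcard : Multiset.card T = T.count 1 + T.count 2 + T.count (4*k+3) + T.count (8*k+2) :=
      card4 d12 d13 d14 d23 d24 d34 hV
    have hP := P_of_min d12 d13 d14 d23 d24 d34 hV (8*k+6) hmin
    have hform : T.sum = T.count 1 + 2 * T.count 2 + (4*k+3) * T.count (4*k+3)
        + (8*k+2) * T.count (8*k+2) := by rw [hsum]; ring
    obtain ⟨m, hm, hmod⟩ :=
      numeric_core k (T.count 1) (T.count 2) (T.count (4*k+3)) (T.count (8*k+2)) hk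
        (by rw [← hform]; exact hdvd)
        (by intro h0; apply hne; rw [← Multiset.card_eq_zero]; omega)
        (by
          intro i j c' e hi hj hc he hne0 hneq hdvd'
          refine hP i j c' e hi hj hc he hne0 hneq ?_
          have : i * 1 + j * 2 + c' * (4*k+3) + e * (8*k+2)
              = i + 2*j + (4*k+3)*c' + (8*k+2)*e := by ring
          rw [this]; exact hdvd')
    exact ⟨m, by rw [hform]; exact hm, hmod⟩

section Transfer

variable {G : Type*} [AddCommGroup G]

open scoped Classical in
/-- discrete logarithm on the set G0 -/
noncomputable def sig (k : ℕ) (f : G) (g : G) : ℕ :=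
  if g = f then 1 else if g = (4*k+3) • f then 4*k+3 else if g = 2 • f then 2 else 8*k+2

/-- the set G0 in normalized form -/
def G0k (k : ℕ) (f : G) : Set G := {f, 2 • f, (4*k+3) • f, (8*k+2) • f}

variable {k : ℕ} {f : G} (hf : addOrderOf f = 8*k+6)
include hf

lemma nsmul_zero_iff (j : ℕ) : j • f = 0 ↔ (8*k+6) ∣ j := by
  rw [← hf]; exact (addOrderOf_dvd_iff_nsmul_eq_zero).symm

lemma nsmul_inj {i j : ℕ} (hij : j ≤ i) : i • f = j • f ↔ (8*k+6) ∣ (i - j) := by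
  have hsplit : i • f = (i-j) • f + j • f := by
    rw [← add_nsmul, Nat.sub_add_cancel hij]
  constructor
  · intro h
    rw [h] at hsplit
    have h0 : (i-j) • f = 0 := by
      have := hsplit.symm
      rwa [add_eq_right] at this
    exact (nsmul_zero_iff hf _).1 h0
  · intro h
    rw [hsplit, (nsmul_zero_iff hf _).2 h, zero_add]

lemma smul_ne {i j : ℕ} (hij : j < i) (hlt : i - j < 8*k+6) : i • f ≠ j • f := by
  intro h
  have hd := (nsmul_inj hf (le_of_lt hij)).1 h
  have := Nat.le_of_dvd (by omega) hd
  omega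

omit hf in
lemma sig_f : sig k f f = 1 := by simp [sig]

lemma sig_h : sig k f ((4*k+3) • f) = 4*k+3 := by
  have h1 : (4*k+3) • f ≠ f := by
    intro h
    exact smul_ne hf (by omega) (by omega) (i := 4*k+3) (j := 1) (by simpa using h)
  simp [sig, h1]

lemma sig_2 : sig k f (2 • f) = 2 := by
  have h1 : 2 • f ≠ f := by
    intro h
    exact smul_ne hf (by omega) (by omega) (i := 2) (j := 1) (by simpa using h)
  have h2 : 2 • f ≠ (4*k+3) • f := by
    intro h
    exact smul_ne hf (by omega) (by omega) (i := 4*k+3) (j := 2) h.symm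
  simp [sig, h1, h2]

lemma sig_w : sig k f ((8*k+2) • f) = 8*k+2 := by
  rcases Nat.eq_zero_or_pos k with rfl | hk
  · norm_num
    exact sig_2 hf
  · have h1 : (8*k+2) • f ≠ f := by
      intro h
      exact smul_ne hf (by omega) (by omega) (i := 8*k+2) (j := 1) (by simpa using h)
    have h2 : (8*k+2) • f ≠ (4*k+3) • f := by
      intro h
      exact smul_ne hf (by omega) (by omega) (i := 8*k+2) (j := 4*k+3) h
    have h3 : (8*k+2) • f ≠ 2 • f := by
      intro h
      exact smul_ne hf (by omega) (by omega) (i := 8*k+2) (j := 2) h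
    simp [sig, h1, h2, h3]

lemma sig_mem {g : G} (hg : g ∈ G0k k f) :
    (sig k f g) • f = g ∧
      (sig k f g = 1 ∨ sig k f g = 2 ∨ sig k f g = 4*k+3 ∨ sig k f g = 8*k+2) := by
  rcases hg with rfl | rfl | rfl | rfl
  · rw [sig_f]; exact ⟨one_nsmul _, by tauto⟩
  · rw [sig_2 hf]; exact ⟨rfl, by tauto⟩
  · rw [sig_h hf]; exact ⟨rfl, by tauto⟩
  · rw [sig_w hf]; exact ⟨rfl, by tauto⟩

lemma sum_map_sig {S : Multiset G} (hS : ∀ g ∈ S, g ∈ G0k k f) :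
    S.sum = ((S.map (sig k f)).sum) • f := by
  induction S using Multiset.induction with
  | empty => simp
  | cons g S ih =>
    rw [Multiset.sum_cons, Multiset.map_cons, Multiset.sum_cons, add_nsmul]
    rw [(sig_mem hf (hS g (Multiset.mem_cons_self g S))).1]
    rw [ih (fun x hx => hS x (Multiset.mem_cons_of_mem hx))]

lemma sum_zero_iff {S : Multiset G} (hS : ∀ g ∈ S, g ∈ G0k k f) :
    S.sum = 0 ↔ (8*k+6) ∣ (S.map (sig k f)).sum := by
  rw [sum_map_sig hf hS]; exact nsmul_zero_iff hf _

lemma map_sig_vals {S : Multiset G} (hS : ∀ g ∈ S, g ∈ G0k k f) :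
    ∀ x ∈ S.map (sig k f), x = 1 ∨ x = 2 ∨ x = 4*k+3 ∨ x = 8*k+2 := by
  intro x hx
  obtain ⟨g, hg, rfl⟩ := Multiset.mem_map.1 hx
  exact (sig_mem hf (hS g hg)).2

/-- transfer of minimality, group → ℕ -/
lemma min_to_N {S : Multiset G} (hS : IsMinZeroSum (G0k k f) S) :
    ∀ T' ≤ S.map (sig k f), T' ≠ 0 → T' ≠ S.map (sig k f) → ¬ (8*k+6) ∣ T'.sum := by
  intro T' hle hne hneq hdvd
  obtain ⟨S', hS'le, rfl⟩ := exists_le_map (sig k f) S T' hle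
  have hmem' : ∀ g ∈ S', g ∈ G0k k f :=
    fun g hg => hS.2.1.1 g (Multiset.mem_of_le hS'le hg)
  have hsum0 : S'.sum = 0 := (sum_zero_iff hf hmem').2 hdvd
  have hne' : S' ≠ 0 := by rintro rfl; simp at hne
  have hneq' : S' ≠ S := by rintro rfl; exact hneq rfl
  exact hS.2.2 S' hS'le hne' hneq' hsum0

/-- the sum invariant of an atom -/
lemma atom_invariant {S : Multiset G} (hS : IsMinZeroSum (G0k k f) S) :
    ∃ m, ((S.map (sig k f)).sum) = (8*k+6) * m ∧ m % k = 1 % k := by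
  apply core k (map_sig_vals hf hS.2.1.1)
  · rw [Ne, Multiset.map_eq_zero]; exact hS.1
  · exact (sum_zero_iff hf hS.2.1.1).1 hS.2.1.2
  · exact min_to_N hf hS

/-- transfer of minimality, ℕ → group -/
lemma min_of_N {S : Multiset G} (hmem : ∀ g ∈ S, g ∈ G0k k f) (hne : S ≠ 0)
    (hdvd : (8*k+6) ∣ (S.map (sig k f)).sum)
    (hminN : ∀ T' ≤ S.map (sig k f), T' ≠ 0 → T' ≠ S.map (sig k f) → ¬ (8*k+6) ∣ T'.sum) :
    IsMinZeroSum (G0k k f) S := by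
  refine ⟨hne, ⟨hmem, (sum_zero_iff hf hmem).2 hdvd⟩, ?_⟩
  intro S' hle hne' hneq' hsum0
  have hmem' : ∀ g ∈ S', g ∈ G0k k f := fun g hg => hmem g (Multiset.mem_of_le hle hg)
  refine hminN (S'.map (sig k f)) (Multiset.map_le_map hle) ?_ ?_
    ((sum_zero_iff hf hmem').1 hsum0)
  · rw [Ne, Multiset.map_eq_zero]; exact hne'
  · intro h
    apply hneq'
    apply Multiset.eq_of_le_of_card_le hle
    have := congrArg Multiset.card h
    simpa using this.ge

/-- factorization invariant -/
lemma fact_invariant (F : Multiset (Multiset G))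
    (hF : ∀ A ∈ F, IsMinZeroSum (G0k k f) A) :
    ∃ M, ((F.sum).map (sig k f)).sum = (8*k+6) * M ∧ M % k = (Multiset.card F) % k := by
  induction F using Multiset.induction with
  | empty => exact ⟨0, by simp, by simp⟩
  | cons A F ih =>
    obtain ⟨M, hM, hMk⟩ := ih (fun B hB => hF B (Multiset.mem_cons_of_mem hB))
    obtain ⟨mA, hmA, hmAk⟩ := atom_invariant hf (hF A (Multiset.mem_cons_self A F))
    refine ⟨mA + M, ?_, ?_⟩
    · rw [Multiset.sum_cons, Multiset.map_add, Multiset.sum_add, hM, hmA]; ring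
    · have := Nat.ModEq.add hmAk hMk
      rw [Multiset.card_cons]
      calc (mA + M) % k = (1 + Multiset.card F) % k := this
        _ = (Multiset.card F + 1) % k := by rw [Nat.add_comm]

/-- any two factorization lengths of the same B are congruent mod k -/
lemma length_mod {B : Multiset G} {l1 l2 : ℕ}
    (h1 : l1 ∈ LengthSet (G0k k f) B) (h2 : l2 ∈ LengthSet (G0k k f) B) :
    l1 % k = l2 % k := by
  obtain ⟨F1, hc1, hm1, hs1⟩ := h1
  obtain ⟨F2, hc2, hm2, hs2⟩ := h2
  obtain ⟨M1, hM1, hM1k⟩ := fact_invariant hf F1 hm1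
  obtain ⟨M2, hM2, hM2k⟩ := fact_invariant hf F2 hm2
  rw [hs1] at hM1
  rw [hs2] at hM2
  have hMeq : M1 = M2 := by
    have : (8*k+6) * M1 = (8*k+6) * M2 := by rw [← hM1, ← hM2]
    exact Nat.eq_of_mul_eq_mul_left (by omega) this
  rw [← hc1, ← hc2, ← hM1k, ← hM2k, hMeq]

end Transfer
section Atoms
open Multiset

-- ℕ-side minimality of the five atoms, k ≥ 1

lemma minN_NY {k : ℕ} (hk : 1 ≤ k) :
    ∀ T' ≤ (1 ::ₘ (4*k+3) ::ₘ replicate (k+1) (8*k+2) : Multiset ℕ),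
      T' ≠ 0 → T' ≠ (1 ::ₘ (4*k+3) ::ₘ replicate (k+1) (8*k+2) : Multiset ℕ) →
      ¬ (8*k+6) ∣ T'.sum := by
  intro T' hle hne hneq hdvd
  have d12 : (1:ℕ) ≠ 2 := by omega
  have d13 : (1:ℕ) ≠ 4*k+3 := by omega
  have d14 : (1:ℕ) ≠ 8*k+2 := by omega
  have d23 : (2:ℕ) ≠ 4*k+3 := by omega
  have d24 : (2:ℕ) ≠ 8*k+2 := by omega
  have d34 : (4*k+3:ℕ) ≠ 8*k+2 := by omega
  have hVA : ∀ x ∈ (1 ::ₘ (4*k+3) ::ₘ replicate (k+1) (8*k+2) : Multiset ℕ),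
      x = 1 ∨ x = 2 ∨ x = 4*k+3 ∨ x = 8*k+2 := by
    intro x hx
    simp only [Multiset.mem_cons] at hx
    rcases hx with rfl | rfl | hx
    · tauto
    · tauto
    · have := Multiset.eq_of_mem_replicate hx; tauto
  have hV' : ∀ x ∈ T', x = 1 ∨ x = 2 ∨ x = 4*k+3 ∨ x = 8*k+2 :=
    fun x hx => hVA x (Multiset.mem_of_le hle hx)
  have cA1 : (1 ::ₘ (4*k+3) ::ₘ replicate (k+1) (8*k+2) : Multiset ℕ).count 1 = 1 := by
    simp [Multiset.count_cons, Multiset.count_replicate, d13.symm, d14.symm, d13, d14] <;> omega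
  have cA2 : (1 ::ₘ (4*k+3) ::ₘ replicate (k+1) (8*k+2) : Multiset ℕ).count 2 = 0 := by
    simp [Multiset.count_cons, Multiset.count_replicate, d12.symm, d23, d24] <;> omega
  have cA3 : (1 ::ₘ (4*k+3) ::ₘ replicate (k+1) (8*k+2) : Multiset ℕ).count (4*k+3) = 1 := by
    simp [Multiset.count_cons, Multiset.count_replicate, d13.symm, d34, d13] <;> omega
  have cA4 : (1 ::ₘ (4*k+3) ::ₘ replicate (k+1) (8*k+2) : Multiset ℕ).count (8*k+2) = k+1 := by
    simp [Multiset.count_cons, Multiset.count_replicate, d14.symm, d34.symm, d14, d34] <;> omega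
  have hi : T'.count 1 ≤ 1 := le_trans (Multiset.count_le_of_le _ hle) (le_of_eq cA1)
  have hj : T'.count 2 ≤ 0 := le_trans (Multiset.count_le_of_le _ hle) (le_of_eq cA2)
  have hc : T'.count (4*k+3) ≤ 1 := le_trans (Multiset.count_le_of_le _ hle) (le_of_eq cA3)
  have he : T'.count (8*k+2) ≤ k+1 := le_trans (Multiset.count_le_of_le _ hle) (le_of_eq cA4)
  have hsum := sum4 d12 d13 d14 d23 d24 d34 hV'
  have hcard := card4 d12 d13 d14 d23 d24 d34 hV'
  obtain ⟨m, hm⟩ := hdvd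
  rw [hsum] at hm
  have hj0 : T'.count 2 = 0 := by omega
  rw [hj0] at hm hcard
  -- key numeric claim: counts are all zero, or (1,0,1,k+1)
  have hmain : (T'.count 1 = 0 ∧ T'.count (4*k+3) = 0 ∧ T'.count (8*k+2) = 0) ∨
      (T'.count 1 = 1 ∧ T'.count (4*k+3) = 1 ∧ T'.count (8*k+2) = k+1) := by
    rcases (by omega : T'.count 1 = 0 ∨ T'.count 1 = 1) with h1 | h1 <;>
      rcases (by omega : T'.count (4*k+3) = 0 ∨ T'.count (4*k+3) = 1) with h3 | h3 <;>
        rw [h1, h3] at hm <;>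
          [skip; skip; skip; skip]
    -- case (0,0): e (8k+2) = (8k+6) m
    · left
      refine ⟨h1, h3, ?_⟩
      by_contra he0
      have he1 : 1 ≤ T'.count (8*k+2) := by omega
      have hm1 : 1 ≤ m := by
        rcases Nat.eq_zero_or_pos m with rfl | h
        · exfalso
          have h8 : 1 * (8*k+2) ≤ T'.count (8*k+2) * (8*k+2) := Nat.mul_le_mul_right _ he1
          omega
        · exact h
      have hme : m ≤ T'.count (8*k+2) := by
        have h8 : (8*k+6) * m = T'.count (8*k+2) * (8*k+2) := by linarith
        by_contra hlt
        push_neg at hlt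
        have h9 : T'.count (8*k+2) * (8*k+2) ≤ m * (8*k+2) := Nat.mul_le_mul_right _ (le_of_lt hlt)
        have h10 : m * (8*k+2) + 4 * m = (8*k+6) * m := by ring
        linarith
      obtain ⟨t, ht⟩ := Nat.exists_eq_add_of_le hme
      rw [ht] at hm he
      have hexp : (m + t) * (8*k+2) = m * (8*k+2) + t * (8*k+2) := by ring
      have h10 : m * (8*k+2) + 4 * m = (8*k+6) * m := by ring
      have h4m : 4 * m = t * (8*k+2) := by linarith
      rcases Nat.eq_zero_or_pos t with rfl | htpos
      · omega
      · have : 1 * (8*k+2) ≤ t * (8*k+2) := Nat.mul_le_mul_right _ htpos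
        omega
    -- case (1,0): 1 + e(8k+2) = (8k+6) m : parity contradiction
    · exfalso
      obtain ⟨u, hu⟩ : 2 ∣ T'.count (8*k+2) * (8*k+2) := ⟨T'.count (8*k+2) * (4*k+1), by ring⟩
      obtain ⟨v, hv⟩ : 2 ∣ (8*k+6) * m := ⟨(4*k+3) * m, by ring⟩
      omega
    -- case (0,1): (4k+3) + e(8k+2) = (8k+6) m : parity contradiction
    · exfalso
      obtain ⟨u, hu⟩ : 2 ∣ T'.count (8*k+2) * (8*k+2) := ⟨T'.count (8*k+2) * (4*k+1), by ring⟩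
      obtain ⟨v, hv⟩ : 2 ∣ (8*k+6) * m := ⟨(4*k+3) * m, by ring⟩
      omega
    -- case (1,1): 4k+4 + e(8k+2) = (8k+6) m
    · right
      refine ⟨h1, h3, ?_⟩
      have hm1 : 1 ≤ m := by
        rcases Nat.eq_zero_or_pos m with rfl | h
        · exfalso; omega
        · exact h
      have hme : m ≤ T'.count (8*k+2) := by
        by_contra hlt
        push_neg at hlt
        have h8 : (8*k+6) * (T'.count (8*k+2) + 1) ≤ (8*k+6) * m := Nat.mul_le_mul_left _ hlt
        have h9 : (8*k+6) * (T'.count (8*k+2) + 1)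
            = T'.count (8*k+2) * (8*k+2) + 4 * T'.count (8*k+2) + (8*k+6) := by ring
        linarith
      have h8 : (8*k+6) * m ≤ (8*k+6) * T'.count (8*k+2) := Nat.mul_le_mul_left _ hme
      have h9 : (8*k+6) * T'.count (8*k+2)
          = T'.count (8*k+2) * (8*k+2) + 4 * T'.count (8*k+2) := by ring
      have h10 : 4*k+4 ≤ 4 * T'.count (8*k+2) := by linarith
      omega
  rcases hmain with ⟨z1, z3, z4⟩ | ⟨o1, o3, o4⟩
  · apply hne
    rw [← Multiset.card_eq_zero]
    omega
  · apply hneq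
    exact eq_of_count4 d12 d13 d14 d23 d24 d34 hV' hVA
      (by omega) (by omega) (by omega) (by omega)

lemma minN_NT {k : ℕ} (hk : 1 ≤ k) :
    ∀ T' ≤ (1 ::ₘ (4*k+3) ::ₘ replicate (2*k+1) 2 : Multiset ℕ),
      T' ≠ 0 → T' ≠ (1 ::ₘ (4*k+3) ::ₘ replicate (2*k+1) 2 : Multiset ℕ) →
      ¬ (8*k+6) ∣ T'.sum := by
  intro T' hle hne hneq hdvd
  have d12 : (1:ℕ) ≠ 2 := by omega
  have d13 : (1:ℕ) ≠ 4*k+3 := by omega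
  have d14 : (1:ℕ) ≠ 8*k+2 := by omega
  have d23 : (2:ℕ) ≠ 4*k+3 := by omega
  have d24 : (2:ℕ) ≠ 8*k+2 := by omega
  have d34 : (4*k+3:ℕ) ≠ 8*k+2 := by omega
  have hVA : ∀ x ∈ (1 ::ₘ (4*k+3) ::ₘ replicate (2*k+1) 2 : Multiset ℕ),
      x = 1 ∨ x = 2 ∨ x = 4*k+3 ∨ x = 8*k+2 := by
    intro x hx
    simp only [Multiset.mem_cons] at hx
    rcases hx with rfl | rfl | hx
    · tauto
    · tauto
    · have := Multiset.eq_of_mem_replicate hx; tauto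
  have hV' : ∀ x ∈ T', x = 1 ∨ x = 2 ∨ x = 4*k+3 ∨ x = 8*k+2 :=
    fun x hx => hVA x (Multiset.mem_of_le hle hx)
  have cA1 : (1 ::ₘ (4*k+3) ::ₘ replicate (2*k+1) 2 : Multiset ℕ).count 1 = 1 := by
    simp [Multiset.count_cons, Multiset.count_replicate, d13.symm, d12, d13] <;> omega
  have cA2 : (1 ::ₘ (4*k+3) ::ₘ replicate (2*k+1) 2 : Multiset ℕ).count 2 = 2*k+1 := by
    simp [Multiset.count_cons, Multiset.count_replicate, d12.symm, d23] <;> omega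
  have cA3 : (1 ::ₘ (4*k+3) ::ₘ replicate (2*k+1) 2 : Multiset ℕ).count (4*k+3) = 1 := by
    simp [Multiset.count_cons, Multiset.count_replicate, d13.symm, d23.symm, d13, d23] <;> omega
  have cA4 : (1 ::ₘ (4*k+3) ::ₘ replicate (2*k+1) 2 : Multiset ℕ).count (8*k+2) = 0 := by
    simp [Multiset.count_cons, Multiset.count_replicate, d14.symm, d34.symm, d24.symm] <;> omega
  have hi : T'.count 1 ≤ 1 := le_trans (Multiset.count_le_of_le _ hle) (le_of_eq cA1)
  have hj : T'.count 2 ≤ 2*k+1 := le_trans (Multiset.count_le_of_le _ hle) (le_of_eq cA2)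
  have hc : T'.count (4*k+3) ≤ 1 := le_trans (Multiset.count_le_of_le _ hle) (le_of_eq cA3)
  have he : T'.count (8*k+2) ≤ 0 := le_trans (Multiset.count_le_of_le _ hle) (le_of_eq cA4)
  have hsum := sum4 d12 d13 d14 d23 d24 d34 hV'
  have hcard := card4 d12 d13 d14 d23 d24 d34 hV'
  obtain ⟨m, hm⟩ := hdvd
  rw [hsum] at hm
  have he0 : T'.count (8*k+2) = 0 := by omega
  rw [he0] at hm hcard
  have hm2 : m ≤ 1 := by
    by_contra h
    push_neg at h
    have h8 : (8*k+6) * 2 ≤ (8*k+6) * m := Nat.mul_le_mul_left _ h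
    rcases (by omega : T'.count (4*k+3) = 0 ∨ T'.count (4*k+3) = 1) with h3 | h3 <;>
      rw [h3] at hm <;> omega
  rcases (by omega : T'.count (4*k+3) = 0 ∨ T'.count (4*k+3) = 1) with h3 | h3 <;>
    rw [h3] at hm <;> interval_cases m
  · apply hne; rw [← Multiset.card_eq_zero]; omega
  · omega
  · omega
  · apply hneq
    exact eq_of_count4 d12 d13 d14 d23 d24 d34 hV' hVA
      (by omega) (by omega) (by omega) (by omega)

lemma minN_NZ {k : ℕ} (hk : 1 ≤ k) :
    ∀ T' ≤ ((4*k+3) ::ₘ {(4*k+3)} : Multiset ℕ),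
      T' ≠ 0 → T' ≠ ((4*k+3) ::ₘ {(4*k+3)} : Multiset ℕ) →
      ¬ (8*k+6) ∣ T'.sum := by
  intro T' hle hne hneq hdvd
  have d12 : (1:ℕ) ≠ 2 := by omega
  have d13 : (1:ℕ) ≠ 4*k+3 := by omega
  have d14 : (1:ℕ) ≠ 8*k+2 := by omega
  have d23 : (2:ℕ) ≠ 4*k+3 := by omega
  have d24 : (2:ℕ) ≠ 8*k+2 := by omega
  have d34 : (4*k+3:ℕ) ≠ 8*k+2 := by omega
  have hVA : ∀ x ∈ ((4*k+3) ::ₘ {(4*k+3)} : Multiset ℕ),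
      x = 1 ∨ x = 2 ∨ x = 4*k+3 ∨ x = 8*k+2 := by
    intro x hx
    simp only [Multiset.mem_cons, Multiset.mem_singleton] at hx
    rcases hx with rfl | rfl <;> tauto
  have hV' : ∀ x ∈ T', x = 1 ∨ x = 2 ∨ x = 4*k+3 ∨ x = 8*k+2 :=
    fun x hx => hVA x (Multiset.mem_of_le hle hx)
  have cA1 : ((4*k+3) ::ₘ {(4*k+3)} : Multiset ℕ).count 1 = 0 := by
    simp [Multiset.count_cons, Multiset.count_singleton, d13] <;> omega
  have cA2 : ((4*k+3) ::ₘ {(4*k+3)} : Multiset ℕ).count 2 = 0 := by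
    simp [Multiset.count_cons, Multiset.count_singleton, d23] <;> omega
  have cA3 : ((4*k+3) ::ₘ {(4*k+3)} : Multiset ℕ).count (4*k+3) = 2 := by
    simp [Multiset.count_cons, Multiset.count_singleton] <;> omega
  have cA4 : ((4*k+3) ::ₘ {(4*k+3)} : Multiset ℕ).count (8*k+2) = 0 := by
    simp [Multiset.count_cons, Multiset.count_singleton, d34.symm] <;> omega
  have hi : T'.count 1 ≤ 0 := le_trans (Multiset.count_le_of_le _ hle) (le_of_eq cA1)
  have hj : T'.count 2 ≤ 0 := le_trans (Multiset.count_le_of_le _ hle) (le_of_eq cA2)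
  have hc : T'.count (4*k+3) ≤ 2 := le_trans (Multiset.count_le_of_le _ hle) (le_of_eq cA3)
  have he : T'.count (8*k+2) ≤ 0 := le_trans (Multiset.count_le_of_le _ hle) (le_of_eq cA4)
  have hsum := sum4 d12 d13 d14 d23 d24 d34 hV'
  have hcard := card4 d12 d13 d14 d23 d24 d34 hV'
  obtain ⟨m, hm⟩ := hdvd
  rw [hsum] at hm
  rw [(by omega : T'.count 1 = 0), (by omega : T'.count 2 = 0),
    (by omega : T'.count (8*k+2) = 0)] at hm
  have hm2 : m ≤ 1 := by
    by_contra h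
    push_neg at h
    have h8 : (8*k+6) * 2 ≤ (8*k+6) * m := Nat.mul_le_mul_left _ h
    have h9 : T'.count (4*k+3) * (4*k+3) ≤ 2 * (4*k+3) := Nat.mul_le_mul_right _ hc
    omega
  rcases (by omega : T'.count (4*k+3) = 0 ∨ T'.count (4*k+3) = 1 ∨ T'.count (4*k+3) = 2)
    with h3 | h3 | h3 <;> rw [h3] at hm <;> interval_cases m
  · apply hne; rw [← Multiset.card_eq_zero]; omega
  · omega
  · omega
  · omega
  · omega
  · apply hneq
    exact eq_of_count4 d12 d13 d14 d23 d24 d34 hV' hVA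
      (by omega) (by omega) (by omega) (by omega)

lemma minN_NX {k : ℕ} (hk : 1 ≤ k) :
    ∀ T' ≤ (1 ::ₘ 1 ::ₘ 2 ::ₘ {(8*k+2)} : Multiset ℕ),
      T' ≠ 0 → T' ≠ (1 ::ₘ 1 ::ₘ 2 ::ₘ {(8*k+2)} : Multiset ℕ) →
      ¬ (8*k+6) ∣ T'.sum := by
  intro T' hle hne hneq hdvd
  have d12 : (1:ℕ) ≠ 2 := by omega
  have d13 : (1:ℕ) ≠ 4*k+3 := by omega
  have d14 : (1:ℕ) ≠ 8*k+2 := by omega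
  have d23 : (2:ℕ) ≠ 4*k+3 := by omega
  have d24 : (2:ℕ) ≠ 8*k+2 := by omega
  have d34 : (4*k+3:ℕ) ≠ 8*k+2 := by omega
  have hVA : ∀ x ∈ (1 ::ₘ 1 ::ₘ 2 ::ₘ {(8*k+2)} : Multiset ℕ),
      x = 1 ∨ x = 2 ∨ x = 4*k+3 ∨ x = 8*k+2 := by
    intro x hx
    simp only [Multiset.mem_cons, Multiset.mem_singleton] at hx
    rcases hx with rfl | rfl | rfl | rfl <;> tauto
  have hV' : ∀ x ∈ T', x = 1 ∨ x = 2 ∨ x = 4*k+3 ∨ x = 8*k+2 :=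
    fun x hx => hVA x (Multiset.mem_of_le hle hx)
  have cA1 : (1 ::ₘ 1 ::ₘ 2 ::ₘ {(8*k+2)} : Multiset ℕ).count 1 = 2 := by
    simp [Multiset.count_cons, Multiset.count_singleton, d12, d14] <;> omega
  have cA2 : (1 ::ₘ 1 ::ₘ 2 ::ₘ {(8*k+2)} : Multiset ℕ).count 2 = 1 := by
    simp [Multiset.count_cons, Multiset.count_singleton, d12.symm, d24] <;> omega
  have cA3 : (1 ::ₘ 1 ::ₘ 2 ::ₘ {(8*k+2)} : Multiset ℕ).count (4*k+3) = 0 := by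
    simp [Multiset.count_cons, Multiset.count_singleton, d13.symm, d23.symm, d34] <;> omega
  have cA4 : (1 ::ₘ 1 ::ₘ 2 ::ₘ {(8*k+2)} : Multiset ℕ).count (8*k+2) = 1 := by
    simp [Multiset.count_cons, Multiset.count_singleton, d14.symm, d24.symm] <;> omega
  have hi : T'.count 1 ≤ 2 := le_trans (Multiset.count_le_of_le _ hle) (le_of_eq cA1)
  have hj : T'.count 2 ≤ 1 := le_trans (Multiset.count_le_of_le _ hle) (le_of_eq cA2)
  have hc : T'.count (4*k+3) ≤ 0 := le_trans (Multiset.count_le_of_le _ hle) (le_of_eq cA3)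
  have he : T'.count (8*k+2) ≤ 1 := le_trans (Multiset.count_le_of_le _ hle) (le_of_eq cA4)
  have hsum := sum4 d12 d13 d14 d23 d24 d34 hV'
  have hcard := card4 d12 d13 d14 d23 d24 d34 hV'
  obtain ⟨m, hm⟩ := hdvd
  rw [hsum] at hm
  rw [(by omega : T'.count (4*k+3) = 0)] at hm
  have hm2 : m ≤ 1 := by
    by_contra h
    push_neg at h
    have h8 : (8*k+6) * 2 ≤ (8*k+6) * m := Nat.mul_le_mul_left _ h
    rcases (by omega : T'.count (8*k+2) = 0 ∨ T'.count (8*k+2) = 1) with h4 | h4 <;>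
      rw [h4] at hm <;> omega
  rcases (by omega : T'.count (8*k+2) = 0 ∨ T'.count (8*k+2) = 1) with h4 | h4 <;>
    rw [h4] at hm <;> interval_cases m
  · apply hne; rw [← Multiset.card_eq_zero]; omega
  · omega
  · omega
  · apply hneq
    exact eq_of_count4 d12 d13 d14 d23 d24 d34 hV' hVA
      (by omega) (by omega) (by omega) (by omega)

lemma minN_NC {k : ℕ} (hk : 1 ≤ k) :
    ∀ T' ≤ (2 ::ₘ 2 ::ₘ {(8*k+2)} : Multiset ℕ),
      T' ≠ 0 → T' ≠ (2 ::ₘ 2 ::ₘ {(8*k+2)} : Multiset ℕ) →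
      ¬ (8*k+6) ∣ T'.sum := by
  intro T' hle hne hneq hdvd
  have d12 : (1:ℕ) ≠ 2 := by omega
  have d13 : (1:ℕ) ≠ 4*k+3 := by omega
  have d14 : (1:ℕ) ≠ 8*k+2 := by omega
  have d23 : (2:ℕ) ≠ 4*k+3 := by omega
  have d24 : (2:ℕ) ≠ 8*k+2 := by omega
  have d34 : (4*k+3:ℕ) ≠ 8*k+2 := by omega
  have hVA : ∀ x ∈ (2 ::ₘ 2 ::ₘ {(8*k+2)} : Multiset ℕ),
      x = 1 ∨ x = 2 ∨ x = 4*k+3 ∨ x = 8*k+2 := by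
    intro x hx
    simp only [Multiset.mem_cons, Multiset.mem_singleton] at hx
    rcases hx with rfl | rfl | rfl <;> tauto
  have hV' : ∀ x ∈ T', x = 1 ∨ x = 2 ∨ x = 4*k+3 ∨ x = 8*k+2 :=
    fun x hx => hVA x (Multiset.mem_of_le hle hx)
  have cA1 : (2 ::ₘ 2 ::ₘ {(8*k+2)} : Multiset ℕ).count 1 = 0 := by
    simp [Multiset.count_cons, Multiset.count_singleton, d12, d14] <;> omega
  have cA2 : (2 ::ₘ 2 ::ₘ {(8*k+2)} : Multiset ℕ).count 2 = 2 := by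
    simp [Multiset.count_cons, Multiset.count_singleton, d24] <;> omega
  have cA3 : (2 ::ₘ 2 ::ₘ {(8*k+2)} : Multiset ℕ).count (4*k+3) = 0 := by
    simp [Multiset.count_cons, Multiset.count_singleton, d23.symm, d34] <;> omega
  have cA4 : (2 ::ₘ 2 ::ₘ {(8*k+2)} : Multiset ℕ).count (8*k+2) = 1 := by
    simp [Multiset.count_cons, Multiset.count_singleton, d24.symm] <;> split_ifs <;> omega
  have hi : T'.count 1 ≤ 0 := le_trans (Multiset.count_le_of_le _ hle) (le_of_eq cA1)
  have hj : T'.count 2 ≤ 2 := le_trans (Multiset.count_le_of_le _ hle) (le_of_eq cA2)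
  have hc : T'.count (4*k+3) ≤ 0 := le_trans (Multiset.count_le_of_le _ hle) (le_of_eq cA3)
  have he : T'.count (8*k+2) ≤ 1 := le_trans (Multiset.count_le_of_le _ hle) (le_of_eq cA4)
  have hsum := sum4 d12 d13 d14 d23 d24 d34 hV'
  have hcard := card4 d12 d13 d14 d23 d24 d34 hV'
  obtain ⟨m, hm⟩ := hdvd
  rw [hsum] at hm
  rw [(by omega : T'.count 1 = 0), (by omega : T'.count (4*k+3) = 0)] at hm
  have hm2 : m ≤ 1 := by
    by_contra h
    push_neg at h
    have h8 : (8*k+6) * 2 ≤ (8*k+6) * m := Nat.mul_le_mul_left _ h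
    rcases (by omega : T'.count (8*k+2) = 0 ∨ T'.count (8*k+2) = 1) with h4 | h4 <;>
      rw [h4] at hm <;> omega
  rcases (by omega : T'.count (8*k+2) = 0 ∨ T'.count (8*k+2) = 1) with h4 | h4 <;>
    rw [h4] at hm <;> interval_cases m
  · apply hne; rw [← Multiset.card_eq_zero]; omega
  · omega
  · omega
  · apply hneq
    exact eq_of_count4 d12 d13 d14 d23 d24 d34 hV' hVA
      (by omega) (by omega) (by omega) (by omega)

end Atoms
section Construction
open Multiset

variable {G : Type*} [AddCommGroup G] {k : ℕ} {f : G} (hf : addOrderOf f = 8*k+6)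
include hf

lemma atomY (hk : 1 ≤ k) :
    IsMinZeroSum (G0k k f) (f ::ₘ ((4*k+3) • f) ::ₘ replicate (k+1) ((8*k+2) • f)) := by
  have hmap : (f ::ₘ ((4*k+3) • f) ::ₘ replicate (k+1) ((8*k+2) • f)).map (sig k f)
      = (1 ::ₘ (4*k+3) ::ₘ replicate (k+1) (8*k+2) : Multiset ℕ) := by
    simp [Multiset.map_cons, Multiset.map_replicate, sig_f, sig_h hf, sig_w hf]
  apply min_of_N hf
  · intro g hg
    simp only [Multiset.mem_cons] at hg
    rcases hg with rfl | rfl | hg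
    · left; rfl
    · right; right; left; rfl
    · have := Multiset.eq_of_mem_replicate hg
      right; right; right; exact this
  · exact Multiset.cons_ne_zero
  · rw [hmap]
    simp [Multiset.sum_cons, Multiset.sum_replicate, smul_eq_mul]
    exact ⟨k+1, by ring⟩
  · rw [hmap]; exact minN_NY hk

lemma atomT (hk : 1 ≤ k) :
    IsMinZeroSum (G0k k f) (f ::ₘ ((4*k+3) • f) ::ₘ replicate (2*k+1) (2 • f)) := by
  have hmap : (f ::ₘ ((4*k+3) • f) ::ₘ replicate (2*k+1) (2 • f)).map (sig k f)
      = (1 ::ₘ (4*k+3) ::ₘ replicate (2*k+1) 2 : Multiset ℕ) := by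
    simp [Multiset.map_cons, Multiset.map_replicate, sig_f, sig_h hf, sig_2 hf]
  apply min_of_N hf
  · intro g hg
    simp only [Multiset.mem_cons] at hg
    rcases hg with rfl | rfl | hg
    · left; rfl
    · right; right; left; rfl
    · have := Multiset.eq_of_mem_replicate hg
      right; left; exact this
  · exact Multiset.cons_ne_zero
  · rw [hmap]
    simp [Multiset.sum_cons, Multiset.sum_replicate, smul_eq_mul]
    exact ⟨1, by ring⟩
  · rw [hmap]; exact minN_NT hk

lemma atomZ (hk : 1 ≤ k) :
    IsMinZeroSum (G0k k f) (((4*k+3) • f) ::ₘ {((4*k+3) • f)}) := by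
  have hmap : (((4*k+3) • f) ::ₘ {((4*k+3) • f)}).map (sig k f)
      = ((4*k+3) ::ₘ {(4*k+3)} : Multiset ℕ) := by
    simp [Multiset.map_cons, Multiset.map_singleton, sig_h hf]
  apply min_of_N hf
  · intro g hg
    simp only [Multiset.mem_cons, Multiset.mem_singleton] at hg
    rcases hg with rfl | rfl <;> (right; right; left; rfl)
  · exact Multiset.cons_ne_zero
  · rw [hmap]
    simp [Multiset.sum_cons, Multiset.sum_singleton]
    exact ⟨1, by ring⟩
  · rw [hmap]; exact minN_NZ hk

lemma atomX (hk : 1 ≤ k) :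
    IsMinZeroSum (G0k k f) (f ::ₘ f ::ₘ (2 • f) ::ₘ {((8*k+2) • f)}) := by
  have hmap : (f ::ₘ f ::ₘ (2 • f) ::ₘ {((8*k+2) • f)}).map (sig k f)
      = (1 ::ₘ 1 ::ₘ 2 ::ₘ {(8*k+2)} : Multiset ℕ) := by
    simp [Multiset.map_cons, Multiset.map_singleton, sig_f, sig_2 hf, sig_w hf]
  apply min_of_N hf
  · intro g hg
    simp only [Multiset.mem_cons, Multiset.mem_singleton] at hg
    rcases hg with rfl | rfl | rfl | rfl
    · left; rfl
    · left; rfl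
    · right; left; rfl
    · right; right; right; rfl
  · exact Multiset.cons_ne_zero
  · rw [hmap]
    simp [Multiset.sum_cons, Multiset.sum_singleton]
    exact ⟨1, by ring⟩
  · rw [hmap]; exact minN_NX hk

lemma atomC (hk : 1 ≤ k) :
    IsMinZeroSum (G0k k f) ((2 • f) ::ₘ (2 • f) ::ₘ {((8*k+2) • f)}) := by
  have hmap : ((2 • f) ::ₘ (2 • f) ::ₘ {((8*k+2) • f)}).map (sig k f)
      = (2 ::ₘ 2 ::ₘ {(8*k+2)} : Multiset ℕ) := by
    simp [Multiset.map_cons, Multiset.map_singleton, sig_2 hf, sig_w hf]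
  apply min_of_N hf
  · intro g hg
    simp only [Multiset.mem_cons, Multiset.mem_singleton] at hg
    rcases hg with rfl | rfl | rfl
    · right; left; rfl
    · right; left; rfl
    · right; right; right; rfl
  · exact Multiset.cons_ne_zero
  · rw [hmap]
    simp [Multiset.sum_cons, Multiset.sum_singleton]
    exact ⟨1, by ring⟩
  · rw [hmap]; exact minN_NC hk

/-- the two factorizations have the same product -/
lemma sums_match (hk : 1 ≤ k) :
    (((4*k+3) • f) ::ₘ {((4*k+3) • f)}) + ((f ::ₘ f ::ₘ (2 • f) ::ₘ {((8*k+2) • f)})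
      + (replicate k ((2 • f) ::ₘ (2 • f) ::ₘ {((8*k+2) • f)})).sum)
    = (f ::ₘ ((4*k+3) • f) ::ₘ replicate (k+1) ((8*k+2) • f))
      + (f ::ₘ ((4*k+3) • f) ::ₘ replicate (2*k+1) (2 • f)) := by
  have hf2 : f ≠ 2 • f := fun h =>
    smul_ne hf (by omega) (by omega) (i := 2) (j := 1) (by simpa using h.symm)
  have hfh : f ≠ (4*k+3) • f := fun h =>
    smul_ne hf (by omega) (by omega) (i := 4*k+3) (j := 1) (by simpa using h.symm)
  have hfw : f ≠ (8*k+2) • f := fun h =>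
    smul_ne hf (by omega) (by omega) (i := 8*k+2) (j := 1) (by simpa using h.symm)
  have h2h : 2 • f ≠ (4*k+3) • f := fun h =>
    smul_ne hf (by omega) (by omega) (i := 4*k+3) (j := 2) h.symm
  have h2w : 2 • f ≠ (8*k+2) • f := fun h =>
    smul_ne hf (by omega) (by omega) (i := 8*k+2) (j := 2) h.symm
  have hhw : (4*k+3) • f ≠ (8*k+2) • f := fun h =>
    smul_ne hf (by omega) (by omega) (i := 8*k+2) (j := 4*k+3) h.symm
  classical
  rw [Multiset.sum_replicate]
  rw [Multiset.ext]
  intro x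
  simp only [Multiset.count_add, Multiset.count_cons, Multiset.count_singleton,
    Multiset.count_replicate, Multiset.count_nsmul]
  by_cases e1 : x = f
  · subst e1
    simp [hf2, hfh, hfw, Ne.symm hf2, Ne.symm hfh, Ne.symm hfw]
  · by_cases e2 : x = 2 • f
    · subst e2
      simp [Ne.symm hf2, h2h, h2w, Ne.symm h2h, Ne.symm h2w, hf2]
      omega
    · by_cases e3 : x = (4*k+3) • f
      · subst e3
        simp [Ne.symm hfh, Ne.symm h2h, hhw, Ne.symm hhw, hfh, h2h]
      · by_cases e4 : x = (8*k+2) • f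
        · subst e4
          simp [Ne.symm hfw, Ne.symm h2w, Ne.symm hhw, hfw, h2w, hhw]
          omega
        · simp [e1, e2, e3, e4, Ne.symm e1, Ne.symm e2, Ne.symm e3, Ne.symm e4]

end Construction
section Final
open Multiset

variable {G : Type*} [AddCommGroup G] {k : ℕ} {f : G} (hf : addOrderOf f = 8*k+6)
include hf

lemma BG_mem_lengths2 (hk : 1 ≤ k) :
    (2 : ℕ) ∈ LengthSet (G0k k f)
      ((f ::ₘ ((4*k+3) • f) ::ₘ replicate (k+1) ((8*k+2) • f))
        + (f ::ₘ ((4*k+3) • f) ::ₘ replicate (2*k+1) (2 • f))) := by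
  refine ⟨(f ::ₘ ((4*k+3) • f) ::ₘ replicate (k+1) ((8*k+2) • f)) ::ₘ
      {(f ::ₘ ((4*k+3) • f) ::ₘ replicate (2*k+1) (2 • f))}, by simp, ?_, by simp⟩
  intro A hA
  simp only [Multiset.mem_cons, Multiset.mem_singleton] at hA
  rcases hA with rfl | rfl
  · exact atomY hf hk
  · exact atomT hf hk

lemma BG_mem_lengthsk2 (hk : 1 ≤ k) :
    (k + 2 : ℕ) ∈ LengthSet (G0k k f)
      ((f ::ₘ ((4*k+3) • f) ::ₘ replicate (k+1) ((8*k+2) • f))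
        + (f ::ₘ ((4*k+3) • f) ::ₘ replicate (2*k+1) (2 • f))) := by
  refine ⟨(((4*k+3) • f) ::ₘ {((4*k+3) • f)}) ::ₘ (f ::ₘ f ::ₘ (2 • f) ::ₘ {((8*k+2) • f)}) ::ₘ
      replicate k ((2 • f) ::ₘ (2 • f) ::ₘ {((8*k+2) • f)}), ?_, ?_, ?_⟩
  · simp [Multiset.card_cons, Multiset.card_replicate]
  · intro A hA
    simp only [Multiset.mem_cons] at hA
    rcases hA with rfl | rfl | hA
    · exact atomZ hf hk
    · exact atomX hf hk
    · rw [Multiset.eq_of_mem_replicate hA]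
      exact atomC hf hk
  · rw [Multiset.sum_cons, Multiset.sum_cons]
    exact sums_match hf hk

lemma BG_zero_sum (hk : 1 ≤ k) :
    IsZeroSumSeq (G0k k f)
      ((f ::ₘ ((4*k+3) • f) ::ₘ replicate (k+1) ((8*k+2) • f))
        + (f ::ₘ ((4*k+3) • f) ::ₘ replicate (2*k+1) (2 • f))) := by
  have hY := (atomY hf hk).2.1
  have hT := (atomT hf hk).2.1
  constructor
  · intro g hg
    rw [Multiset.mem_add] at hg
    rcases hg with hg | hg
    · exact hY.1 g hg
    · exact hT.1 g hg
  · rw [Multiset.sum_add, hY.2, hT.2, add_zero]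

end Final

/-- If `n ≡ 6 (mod 8)` and `f` generates a cyclic group of
order `n`, then `min Δ(B({f, 2f, (n/2)f, -4f})) = (n-6)/8`. -/
theorem stmt_13 {G : Type*} [AddCommGroup G] [Fintype G] (n : ℕ)
    (hcard : Fintype.card G = n) (hn8 : n % 8 = 6)
    (f : G) (hf : addOrderOf f = n) :
    minDelta ({f, 2 • f, (n / 2) • f, -(4 • f)} : Set G) = (n - 6) / 8 := by
  obtain ⟨k, rfl⟩ : ∃ k, n = 8*k+6 := ⟨(n-6)/8, by omega⟩
  have hdiv : (8*k+6)/2 = 4*k+3 := by omega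
  have hneg : -(4 • f) = (8*k+2) • f := by
    have h0 : (8*k+2) • f + 4 • f = 0 := by
      rw [← add_nsmul]
      exact (nsmul_zero_iff hf (8*k+2+4)).2 ⟨1, by ring⟩
    exact (eq_neg_of_add_eq_zero_left h0).symm
  rw [hdiv, hneg, show (8*k+6-6)/8 = k by omega]
  show minDelta (G0k k f) = k
  have LB : ∀ d ∈ DeltaB (G0k k f), k ∣ d ∧ 0 < d := by
    intro d hd
    simp only [DeltaB, Set.mem_iUnion, Set.mem_setOf_eq] at hd
    obtain ⟨B, hB, a, ha, b, hb, hab, hsub, hgap⟩ := hd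
    have hmod := length_mod hf ha hb
    have hdvd : k ∣ b - a := (Nat.modEq_iff_dvd' (le_of_lt hab)).1 hmod
    exact ⟨hsub ▸ hdvd, by omega⟩
  rcases Nat.eq_zero_or_pos k with rfl | hk
  · have hempty : DeltaB (G0k 0 f) = ∅ := by
      rw [Set.eq_empty_iff_forall_notMem]
      intro d hd
      have := LB d hd
      omega
    show sInf (DeltaB (G0k 0 f)) = 0
    rw [hempty, Nat.sInf_empty]
  · have hkmem : k ∈ DeltaB (G0k k f) := by
      simp only [DeltaB, Set.mem_iUnion, Set.mem_setOf_eq]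
      refine ⟨(f ::ₘ ((4*k+3) • f) ::ₘ replicate (k+1) ((8*k+2) • f))
        + (f ::ₘ ((4*k+3) • f) ::ₘ replicate (2*k+1) (2 • f)), BG_zero_sum hf hk,
        2, BG_mem_lengths2 hf hk, k+2, BG_mem_lengthsk2 hf hk, by omega, by omega, ?_⟩
      rintro c hc ⟨hc1, hc2⟩
      have hmod := length_mod hf (BG_mem_lengths2 hf hk) hc
      have hdvd : k ∣ c - 2 := (Nat.modEq_iff_dvd' (by omega)).1 hmod
      have := Nat.le_of_dvd (by omega) hdvd
      omega
    exact le_antisymm (Nat.sInf_le hkmem)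
      (le_csInf ⟨k, hkmem⟩ (fun d hd => Nat.le_of_dvd (LB d hd).2 (LB d hd).1))
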